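/- Let f be a polynomial with complex coefficients, r₀ > 0, and t₀ ∈ ℝ with Im f(r₀·exp(i t₀)) = 0. Suppose Im α₀ > 0, where α₀ = i·r₀·exp(i t₀)·f′(r₀·exp(i t₀)). Then there exist ε > 0 and a differentiable function φ : (r₀ − ε, r₀ + ε) → ℝ with φ(r₀) = t₀ such that Im f(s·exp(i φ(s))) = 0 for all s ∈ (r₀ − ε, r₀ + ε), and the real-valued function g(s) = Re f(s·exp(i φ(s))) is strictly increasing on (r₀ − ε, r₀ + ε). (An upcrossing point of the curve f_r moves continuously to the right along the real axis as r increases.) -/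

import Mathlib

open Complex Set

noncomputable def shearEquiv (c d : ℝ) (hd : d ≠ 0) : (ℝ × ℝ) ≃L[ℝ] (ℝ × ℝ) :=
  LinearEquiv.toContinuousLinearEquiv
  { toFun := fun p => (p.1, c * p.1 + d * p.2)
    invFun := fun q => (q.1, (q.2 - c * q.1) / d)
    map_add' := fun p q => by ext <;> simp <;> ring
    map_smul' := fun m p => by ext <;> simp <;> ring
    left_inv := fun p => by ext <;> field_simp <;> ring
    right_inv := fun q => by ext <;> field_simp <;> ring }

theorem poly_contDiff (f : Polynomial ℂ) (n : ℕ∞) : ContDiff ℂ n fun z : ℂ => f.eval z := by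
  induction f using Polynomial.induction_on' with
  | add p q hp hq => simpa [Polynomial.eval_add] using hp.add hq
  | monomial k a => simpa [Polynomial.eval_monomial] using (contDiff_const (c := a)).mul (contDiff_id.pow k)

theorem upcrossing_moves_right (f : Polynomial ℂ) (r₀ : ℝ) (hr₀ : 0 < r₀) (t₀ : ℝ)
    (ht₀ : (f.eval ((r₀ : ℂ) * Complex.exp (Complex.I * t₀))).im = 0)
    (α₀ : ℂ)
    (hα₀ : α₀ = Complex.I * r₀ * Complex.exp (Complex.I * t₀) *
        f.derivative.eval ((r₀ : ℂ) * Complex.exp (Complex.I * t₀)))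
    (him : 0 < α₀.im) :
    ∃ ε > (0 : ℝ), ∃ φ : ℝ → ℝ, φ r₀ = t₀ ∧
      DifferentiableOn ℝ φ (Set.Ioo (r₀ - ε) (r₀ + ε)) ∧
      (∀ s ∈ Set.Ioo (r₀ - ε) (r₀ + ε),
        (f.eval ((s : ℂ) * Complex.exp (Complex.I * φ s))).im = 0) ∧
      StrictMonoOn (fun s : ℝ => (f.eval ((s : ℂ) * Complex.exp (Complex.I * φ s))).re)
        (Set.Ioo (r₀ - ε) (r₀ + ε)) := by
  set E₀ : ℂ := Complex.exp (Complex.I * t₀) with hE₀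
  set z₀ : ℂ := (r₀ : ℂ) * E₀ with hz₀
  set c : ℝ := (f.derivative.eval z₀ * E₀).im with hc
  set d : ℝ := α₀.im with hd
  have hdne : d ≠ 0 := ne_of_gt him
  set p₀ : ℝ × ℝ := (r₀, t₀) with hp₀
  set Ψ : ℝ × ℝ → ℝ × ℝ :=
    fun p => (p.1, (f.eval ((p.1 : ℂ) * Complex.exp (Complex.I * p.2))).im) with hΨ
  have hsm : ContDiff ℝ 2 Ψ :=
    contDiff_fst.prodMk (Complex.imCLM.contDiff.comp
      (((poly_contDiff f 2).restrict_scalars ℝ).comp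
        ((Complex.ofRealCLM.contDiff.comp contDiff_fst).mul
          (Complex.contDiff_exp.comp (contDiff_const.mul
            (Complex.ofRealCLM.contDiff.comp contDiff_snd))))))
  -- derivative of Ψ at p₀
  have h1 : HasFDerivAt (fun p : ℝ × ℝ => ((p.1 : ℝ) : ℂ))
      (Complex.ofRealCLM.comp (ContinuousLinearMap.fst ℝ ℝ ℝ)) p₀ :=
    (Complex.ofRealCLM.comp (ContinuousLinearMap.fst ℝ ℝ ℝ)).hasFDerivAt
  have h2a : HasFDerivAt (fun p : ℝ × ℝ => (Complex.I * (p.2 : ℂ)))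
      (Complex.I • (Complex.ofRealCLM.comp (ContinuousLinearMap.snd ℝ ℝ ℝ))) p₀ :=
    ((Complex.ofRealCLM.comp (ContinuousLinearMap.snd ℝ ℝ ℝ)).hasFDerivAt).const_mul Complex.I
  have hz := h1.mul h2a.cexp
  have hcomp := ((f.hasDerivAt z₀).hasFDerivAt.restrictScalars ℝ).comp p₀ (by exact hz)
  have hIm := (Complex.imCLM.hasFDerivAt.comp p₀ hcomp)
  have hΨd := (hasFDerivAt_fst (p := p₀)).prodMk hIm
  have hΨd' : HasFDerivAt Ψ ((shearEquiv c d hdne : (ℝ × ℝ) →L[ℝ] (ℝ × ℝ))) p₀ := by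
    refine HasFDerivAt.congr_fderiv hΨd ?_
    apply ContinuousLinearMap.ext
    rintro ⟨x, y⟩
    ext
    · simp [shearEquiv]
    · simp [shearEquiv, hα₀, hc, hd]
      ring
  -- local inverse
  have hn : (2 : WithTop ℕ∞) ≠ 0 := by norm_num
  have hΨat : ContDiffAt ℝ 2 Ψ p₀ := hsm.contDiffAt
  set g : ℝ × ℝ → ℝ × ℝ := hΨat.localInverse hΨd' hn with hg
  have hΨp₀ : Ψ p₀ = (r₀, 0) := by
    simp only [hΨ, hp₀]
    exact Prod.ext rfl ht₀
  have hg0 : g (r₀, 0) = p₀ := by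
    rw [← hΨp₀]; exact hΨat.localInverse_apply_image hΨd' hn
  have hgC : ContDiffAt ℝ 2 g ((r₀ : ℝ), (0 : ℝ)) := hΨp₀ ▸ hΨat.to_localInverse hΨd' hn
  have hrinv : ∀ᶠ q in nhds ((r₀ : ℝ), (0 : ℝ)), Ψ (g q) = q := by
    have := (hΨat.hasStrictFDerivAt' hΨd' hn).eventually_right_inverse
    rwa [hΨp₀] at this
  obtain ⟨u, hu_mem, hu⟩ := hgC.contDiffOn (le_refl _) (by simp)
  have hu' : ContDiffOn ℝ 2 g (interior u) := hu.mono interior_subset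
  set φ : ℝ → ℝ := fun s => (g (s, 0)).2 with hφdef
  have hφr₀ : φ r₀ = t₀ := by rw [hφdef]; simp [hg0, hp₀]
  -- continuity data at r₀
  have hjc : Continuous (fun s : ℝ => ((s : ℝ), (0 : ℝ))) := continuous_id.prodMk continuous_const
  have hφcont : ContinuousAt φ r₀ := by
    have h1 : ContinuousAt g ((r₀ : ℝ), (0 : ℝ)) := hgC.continuousAt
    have h0 : ContinuousAt (fun s : ℝ => g (s, 0)) r₀ := ContinuousAt.comp (x := r₀) (f := fun s : ℝ => ((s : ℝ), (0 : ℝ))) h1 hjc.continuousAt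
    exact continuous_snd.continuousAt.comp h0
  set w : ℝ → ℝ := fun s => (Complex.exp (Complex.I * φ s) *
      f.derivative.eval ((s : ℂ) * Complex.exp (Complex.I * φ s))).re with hwdef
  have hwc : ContinuousAt w r₀ := by
    have h₁ : ContinuousAt (fun s : ℝ => ((φ s : ℝ) : ℂ)) r₀ :=
      Complex.continuous_ofReal.continuousAt.comp hφcont
    have h₂ : ContinuousAt (fun s : ℝ => Complex.exp (Complex.I * φ s)) r₀ :=
      Complex.continuous_exp.continuousAt.comp (continuousAt_const.mul h₁)
    have h₃ : ContinuousAt (fun s : ℝ => (s : ℂ) * Complex.exp (Complex.I * φ s)) r₀ :=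
      Complex.continuous_ofReal.continuousAt.mul h₂
    have h₄ : ContinuousAt (fun s : ℝ =>
        f.derivative.eval ((s : ℂ) * Complex.exp (Complex.I * φ s))) r₀ :=
      (f.derivative.continuous_aeval).continuousAt.comp h₃
    exact Complex.continuous_re.continuousAt.comp (h₂.mul h₄)
  have hwr₀ : α₀.im = r₀ * w r₀ := by
    rw [hα₀, hwdef]
    simp [hφr₀]
    ring
  have hw0 : 0 < w r₀ := by
    by_contra h
    push_neg at h
    nlinarith [hwr₀, him, hr₀]
  -- choose ε
  have hSmem : {s : ℝ | ((s : ℝ), (0 : ℝ)) ∈ interior u ∧ Ψ (g (s, 0)) = (s, 0) ∧ 0 < w s ∧ 0 < s}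
      ∈ nhds r₀ := by
    have m1 : {s : ℝ | ((s : ℝ), (0 : ℝ)) ∈ interior u} ∈ nhds r₀ :=
      hjc.continuousAt.preimage_mem_nhds
        (isOpen_interior.mem_nhds (mem_interior_iff_mem_nhds.2 hu_mem))
    have m2 : {s : ℝ | Ψ (g (s, 0)) = ((s : ℝ), (0 : ℝ))} ∈ nhds r₀ :=
      hjc.continuousAt hrinv
    have m3 : {s : ℝ | 0 < w s} ∈ nhds r₀ := hwc (Ioi_mem_nhds hw0)
    have m4 : {s : ℝ | 0 < s} ∈ nhds r₀ := Ioi_mem_nhds hr₀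
    filter_upwards [m1, m2, m3, m4] with s h1 h2 h3 h4
    exact ⟨h1, h2, h3, h4⟩
  obtain ⟨ε, hεpos, hball⟩ := Metric.mem_nhds_iff.1 hSmem
  rw [Real.ball_eq_Ioo] at hball
  have himzero : ∀ s ∈ Ioo (r₀ - ε) (r₀ + ε),
      (f.eval ((s : ℂ) * Complex.exp (Complex.I * φ s))).im = 0 := by
    intro s hs
    obtain ⟨_, hinv, _, _⟩ := hball hs
    have h1 : (g (s, 0)).1 = s := congrArg Prod.fst hinv
    have h2 := congrArg Prod.snd hinv
    simp only [hΨ] at h2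
    rw [h1] at h2
    exact h2
  have key : ∀ s ∈ Ioo (r₀ - ε) (r₀ + ε), ∃ μ : ℂ,
      HasDerivAt (fun s' : ℝ => f.eval ((s' : ℂ) * Complex.exp (Complex.I * φ s'))) μ s ∧
      0 < μ.re := by
    intro s hs
    obtain ⟨hint, hinv, hwpos, hspos⟩ := hball hs
    have hgat : ContDiffAt ℝ 2 g ((s : ℝ), (0 : ℝ)) :=
      hu'.contDiffAt (isOpen_interior.mem_nhds hint)
    have hφd : DifferentiableAt ℝ φ s :=
      (differentiable_snd.differentiableAt).comp s
        ((hgat.differentiableAt (by norm_num)).comp s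
          ((differentiableAt_id).prodMk (differentiableAt_const 0)))
    set δ : ℝ := deriv φ s with hδ
    have hφdd : HasDerivAt φ δ s := hφd.hasDerivAt
    set es : ℂ := Complex.exp (Complex.I * φ s) with hes
    set fd : ℂ := f.derivative.eval ((s : ℂ) * es) with hfd2
    have d1 : HasDerivAt (fun s' : ℝ => ((s' : ℝ) : ℂ)) 1 s := by
      simpa using (hasDerivAt_id s).ofReal_comp
    have d2 : HasDerivAt (fun s' : ℝ => ((φ s' : ℝ) : ℂ)) ((δ : ℝ) : ℂ) s :=
      hφdd.ofReal_comp
    have d3 : HasDerivAt (fun s' : ℝ => Complex.I * (φ s' : ℂ)) (Complex.I * δ) s :=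
      d2.const_mul Complex.I
    have d4 : HasDerivAt (fun s' : ℝ => Complex.exp (Complex.I * φ s'))
        (Complex.exp (Complex.I * φ s) * (Complex.I * δ)) s := by
      simpa using d3.cexp
    have d5 := d1.mul d4
    have hp := (f.hasDerivAt ((s : ℂ) * es)).hasFDerivAt.restrictScalars ℝ
    have d6 : HasDerivAt (fun s' : ℝ => f.eval ((s' : ℂ) * Complex.exp (Complex.I * φ s')))
        ((1 * es + (s : ℂ) * (es * (Complex.I * δ))) * fd) s := by
      exact hp.comp_hasDerivAt s d5
    set μ : ℂ := (1 * es + (s : ℂ) * (es * (Complex.I * δ))) * fd with hμ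
    refine ⟨μ, d6, ?_⟩
    have hImμ : μ.im = 0 := by
      have hre : HasDerivAt
          (fun s' : ℝ => (f.eval ((s' : ℂ) * Complex.exp (Complex.I * φ s'))).im) μ.im s := by
        exact (Complex.imCLM.hasFDerivAt.comp_hasDerivAt s d6)
      have hev : (fun s' : ℝ => (f.eval ((s' : ℂ) * Complex.exp (Complex.I * φ s'))).im)
          =ᶠ[nhds s] (fun _ => (0 : ℝ)) := by
        filter_upwards [Ioo_mem_nhds hs.1 hs.2] with x hx
        exact himzero x hx
      have h0 : HasDerivAt (fun _ : ℝ => (0 : ℝ)) μ.im s := hre.congr_of_eventuallyEq hev.symm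
      exact h0.unique (hasDerivAt_const s 0)
    have hμ2 : μ = (es * fd) * (1 + Complex.I * ((s * δ : ℝ) : ℂ)) := by
      rw [hμ]; push_cast; ring
    have ha : 0 < (es * fd).re := by
      have := hwpos
      rw [hwdef] at this
      simpa [hes, hfd2] using this
    rw [hμ2] at hImμ ⊢
    simp only [Complex.add_re, Complex.add_im, Complex.mul_re, Complex.mul_im,
      Complex.I_re, Complex.I_im, Complex.ofReal_re, Complex.ofReal_im, Complex.one_re,
      Complex.one_im] at hImμ ⊢
    simp only [Complex.mul_re] at ha
    have key2 := congrArg (· * (s * δ)) hImμ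
    simp only [zero_mul] at key2
    nlinarith [ha, key2, hImμ, sq_nonneg (s * δ), mul_nonneg ha.le (sq_nonneg (s * δ))]
  refine ⟨ε, hεpos, φ, hφr₀, ?_, ?_, ?_⟩
  · -- differentiability
    intro s hs
    obtain ⟨hint, _, _, _⟩ := hball hs
    have hgat : ContDiffAt ℝ 2 g ((s : ℝ), (0 : ℝ)) :=
      hu'.contDiffAt (isOpen_interior.mem_nhds hint)
    have : DifferentiableAt ℝ φ s :=
      (differentiable_snd.differentiableAt).comp s
        ((hgat.differentiableAt (by norm_num)).comp s
          ((differentiableAt_id).prodMk (differentiableAt_const 0)))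
    exact this.differentiableWithinAt
  · -- Im = 0
    exact himzero
  · -- strict monotonicity
    apply strictMonoOn_of_deriv_pos (convex_Ioo _ _)
    · intro s hs
      obtain ⟨μ, hd, _⟩ := key s hs
      have : HasDerivAt (fun s' : ℝ =>
          (f.eval ((s' : ℂ) * Complex.exp (Complex.I * φ s'))).re) μ.re s := by
        exact (Complex.reCLM.hasFDerivAt.comp_hasDerivAt s hd)
      exact this.continuousAt.continuousWithinAt
    · intro s hs
      rw [interior_Ioo] at hs
      obtain ⟨μ, hd, hpos⟩ := key s hs
      have hG : HasDerivAt (fun s' : ℝ =>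
          (f.eval ((s' : ℂ) * Complex.exp (Complex.I * φ s'))).re) μ.re s := by
        exact (Complex.reCLM.hasFDerivAt.comp_hasDerivAt s hd)
      rw [hG.deriv]
      exact hpos
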